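/- Let A, B, C be pairwise disjoint subsets of [n] with |A| + |B| + |C| = 2s even, and each of |A|, |B|, |C| at most s. Form the 3s × 3s variable matrix M over F_q[x_1,...,x_n] with block structure: the top three blocks of s rows are (I_s | I_s | I_s); below, in the first block of s columns the Vandermonde matrix V_s(x_a : a ∈ A) (rows (1, x_a, ..., x_a^{s-1})), in the second block V_s(x_b : b ∈ B), and in the third V_s(x_c : c ∈ C), with zeros elsewhere. Then det(M) is a nonzero polynomial of degree s(s-1), in which each variable has individual degree at most s-1. -/

import Mathlib

open MvPolynomial

/-- The 3-wise intersection matrix: top `s` rows `(I_s | I_s | I_s)`, and below a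
block-diagonal matrix with Vandermonde blocks `V_s(x_a : a ∈ A)`, `V_s(x_b : b ∈ B)`,
`V_s(x_c : c ∈ C)`, over the polynomial ring `F[x_1,...,x_n]`. -/
noncomputable def M3 (F : Type*) [Field F] (n s : ℕ) (A B C : Finset (Fin n)) :
    Matrix (Fin s ⊕ ({a // a ∈ A} ⊕ {b // b ∈ B} ⊕ {c // c ∈ C}))
      (Fin s ⊕ (Fin s ⊕ Fin s)) (MvPolynomial (Fin n) F) :=
  fun r c =>
    match r, c with
    | Sum.inl i, Sum.inl j => if i = j then 1 else 0
    | Sum.inl i, Sum.inr (Sum.inl j) => if i = j then 1 else 0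
    | Sum.inl i, Sum.inr (Sum.inr j) => if i = j then 1 else 0
    | Sum.inr (Sum.inl a), Sum.inl j => MvPolynomial.X a.1 ^ (j : ℕ)
    | Sum.inr (Sum.inl _), Sum.inr _ => 0
    | Sum.inr (Sum.inr (Sum.inl b)), Sum.inr (Sum.inl j) => MvPolynomial.X b.1 ^ (j : ℕ)
    | Sum.inr (Sum.inr (Sum.inl _)), Sum.inl _ => 0
    | Sum.inr (Sum.inr (Sum.inl _)), Sum.inr (Sum.inr _) => 0
    | Sum.inr (Sum.inr (Sum.inr c')), Sum.inr (Sum.inr j) => MvPolynomial.X c'.1 ^ (j : ℕ)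
    | Sum.inr (Sum.inr (Sum.inr _)), Sum.inl _ => 0
    | Sum.inr (Sum.inr (Sum.inr _)), Sum.inr (Sum.inl _) => 0


namespace Stmt3Aux
open Finset

variable {n s : ℕ} {A B C : Finset (Fin n)}

/-- column value -/
def cval : (Fin s ⊕ (Fin s ⊕ Fin s)) → ℕ := Sum.elim Fin.val (Sum.elim Fin.val Fin.val)

lemma cval_le (k : Fin s ⊕ (Fin s ⊕ Fin s)) : cval k ≤ s - 1 := by
  rcases k with j | j | j <;> simp [cval] <;> (have := j.isLt; omega)

/-- the exponent finsupp associated to a choice of columns -/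
noncomputable def w (τ : (Fin s ⊕ ({a // a ∈ A} ⊕ {b // b ∈ B} ⊕ {c // c ∈ C})) → (Fin s ⊕ (Fin s ⊕ Fin s))) :
    Fin n →₀ ℕ :=
  (∑ a : {a // a ∈ A}, Finsupp.single a.1 (cval (τ (Sum.inr (Sum.inl a)))))
  + (∑ b : {b // b ∈ B}, Finsupp.single b.1 (cval (τ (Sum.inr (Sum.inr (Sum.inl b))))))
  + (∑ c : {c // c ∈ C}, Finsupp.single c.1 (cval (τ (Sum.inr (Sum.inr (Sum.inr c))))))

lemma sum_single_apply_of_mem {D : Finset (Fin n)} (g : {a // a ∈ D} → ℕ) {x : Fin n}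
    (hx : x ∈ D) :
    (∑ a : {a // a ∈ D}, Finsupp.single a.1 (g a)) x = g ⟨x, hx⟩ := by
  rw [← Finsupp.applyAddHom_apply, map_sum (Finsupp.applyAddHom x : (Fin n →₀ ℕ) →+ ℕ)]
  rw [Finset.sum_eq_single (⟨x, hx⟩ : {a // a ∈ D})]
  · simp
  · rintro ⟨y, hy⟩ - hne
    simp only [Finsupp.applyAddHom_apply, Finsupp.single_apply]
    rw [if_neg]
    intro h; exact hne (Subtype.ext h)
  · intro h; exact absurd (Finset.mem_univ _) h

lemma sum_single_apply_of_not_mem {D : Finset (Fin n)} (g : {a // a ∈ D} → ℕ) {x : Fin n}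
    (hx : x ∉ D) :
    (∑ a : {a // a ∈ D}, Finsupp.single a.1 (g a)) x = 0 := by
  rw [← Finsupp.applyAddHom_apply, map_sum (Finsupp.applyAddHom x : (Fin n →₀ ℕ) →+ ℕ)]
  apply Finset.sum_eq_zero
  rintro ⟨y, hy⟩ -
  simp only [Finsupp.applyAddHom_apply, Finsupp.single_apply]
  rw [if_neg]
  intro h; exact hx (h ▸ hy)

lemma finsupp_total_finset_sum {ι : Type*} (t : Finset ι) (u : ι → (Fin n →₀ ℕ)) :
    (∑ i ∈ t, u i).sum (fun _ m => m) = ∑ i ∈ t, (u i).sum (fun _ m => m) := by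
  induction t using Finset.cons_induction with
  | empty => simp
  | cons a t ha ih =>
      rw [Finset.sum_cons, Finset.sum_cons, Finsupp.sum_add_index' (fun _ => rfl) (fun _ _ _ => rfl), ih]

lemma sum_single_total {D : Finset (Fin n)} (g : {a // a ∈ D} → ℕ) :
    (∑ a : {a // a ∈ D}, Finsupp.single a.1 (g a)).sum (fun _ m => m) = ∑ a : {a // a ∈ D}, g a := by
  rw [finsupp_total_finset_sum]
  exact Finset.sum_congr rfl fun a _ => Finsupp.sum_single_index rfl

/-- Good: the entry picked in each row is nonzero -/
def Good (τ : (Fin s ⊕ ({a // a ∈ A} ⊕ {b // b ∈ B} ⊕ {c // c ∈ C})) → (Fin s ⊕ (Fin s ⊕ Fin s))) :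
    Prop :=
  (∀ i : Fin s, τ (Sum.inl i) = Sum.inl i ∨ τ (Sum.inl i) = Sum.inr (Sum.inl i) ∨
      τ (Sum.inl i) = Sum.inr (Sum.inr i)) ∧
  (∀ a : {a // a ∈ A}, ∃ j : Fin s, τ (Sum.inr (Sum.inl a)) = Sum.inl j) ∧
  (∀ b : {b // b ∈ B}, ∃ j : Fin s, τ (Sum.inr (Sum.inr (Sum.inl b))) = Sum.inr (Sum.inl j)) ∧
  (∀ c : {c // c ∈ C}, ∃ j : Fin s, τ (Sum.inr (Sum.inr (Sum.inr c))) = Sum.inr (Sum.inr j))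

variable (F : Type*) [Field F]

lemma good_of_prod_ne_zero
    (τ : (Fin s ⊕ ({a // a ∈ A} ⊕ {b // b ∈ B} ⊕ {c // c ∈ C})) → (Fin s ⊕ (Fin s ⊕ Fin s)))
    (h : ∏ r, M3 F n s A B C r (τ r) ≠ 0) : Good τ := by
  rw [Finset.prod_ne_zero_iff] at h
  refine ⟨fun i => ?_, fun a => ?_, fun b => ?_, fun c => ?_⟩
  · have := h (Sum.inl i) (Finset.mem_univ _)
    rcases hk : τ (Sum.inl i) with j | j | j <;> rw [hk] at this <;>
      simp only [M3] at this
    · left; by_cases hij : i = j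
      · rw [hij]
      · exact absurd (by rw [if_neg hij]) this
    · right; left; by_cases hij : i = j
      · rw [hij]
      · exact absurd (by rw [if_neg hij]) this
    · right; right; by_cases hij : i = j
      · rw [hij]
      · exact absurd (by rw [if_neg hij]) this
  · have := h (Sum.inr (Sum.inl a)) (Finset.mem_univ _)
    rcases hk : τ (Sum.inr (Sum.inl a)) with j | j | j <;> rw [hk] at this <;>
      simp only [M3] at this
    · exact ⟨j, rfl⟩
    · exact absurd rfl this
    · exact absurd rfl this
  · have := h (Sum.inr (Sum.inr (Sum.inl b))) (Finset.mem_univ _)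
    rcases hk : τ (Sum.inr (Sum.inr (Sum.inl b))) with j | j | j <;> rw [hk] at this <;>
      simp only [M3] at this
    · exact absurd rfl this
    · exact ⟨j, rfl⟩
    · exact absurd rfl this
  · have := h (Sum.inr (Sum.inr (Sum.inr c))) (Finset.mem_univ _)
    rcases hk : τ (Sum.inr (Sum.inr (Sum.inr c))) with j | j | j <;> rw [hk] at this <;>
      simp only [M3] at this
    · exact absurd rfl this
    · exact absurd rfl this
    · exact ⟨j, rfl⟩

lemma prod_X_pow_monomial {ι : Type*} (t : Finset ι) (v : ι → Fin n) (g : ι → ℕ) :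
    ∏ i ∈ t, (X (v i) : MvPolynomial (Fin n) F) ^ g i
      = monomial (∑ i ∈ t, Finsupp.single (v i) (g i)) (1 : F) := by
  induction t using Finset.cons_induction with
  | empty => simp
  | cons a t ha ih =>
      rw [Finset.prod_cons, Finset.sum_cons, ih, X_pow_eq_monomial, monomial_mul, one_mul]

lemma prod_eq_monomial
    (τ : (Fin s ⊕ ({a // a ∈ A} ⊕ {b // b ∈ B} ⊕ {c // c ∈ C})) → (Fin s ⊕ (Fin s ⊕ Fin s)))
    (h : Good τ) :
    ∏ r, M3 F n s A B C r (τ r) = monomial (w τ) (1 : F) := by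
  rw [Fintype.prod_sum_type, Fintype.prod_sum_type, Fintype.prod_sum_type]
  have htop : ∏ i : Fin s, M3 F n s A B C (Sum.inl i) (τ (Sum.inl i)) = 1 := by
    apply Finset.prod_eq_one
    intro i _
    rcases h.1 i with hk | hk | hk <;> rw [hk] <;> simp [M3]
  have hA : ∏ a : {a // a ∈ A}, M3 F n s A B C (Sum.inr (Sum.inl a)) (τ (Sum.inr (Sum.inl a)))
      = ∏ a : {a // a ∈ A}, (X a.1 : MvPolynomial (Fin n) F) ^ (cval (τ (Sum.inr (Sum.inl a)))) := by
    apply Finset.prod_congr rfl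
    intro a _
    obtain ⟨j, hj⟩ := h.2.1 a
    rw [hj]; simp [M3, cval]
  have hB : ∏ b : {b // b ∈ B}, M3 F n s A B C (Sum.inr (Sum.inr (Sum.inl b)))
        (τ (Sum.inr (Sum.inr (Sum.inl b))))
      = ∏ b : {b // b ∈ B}, (X b.1 : MvPolynomial (Fin n) F)
          ^ (cval (τ (Sum.inr (Sum.inr (Sum.inl b))))) := by
    apply Finset.prod_congr rfl
    intro b _
    obtain ⟨j, hj⟩ := h.2.2.1 b
    rw [hj]; simp [M3, cval]
  have hC : ∏ c : {c // c ∈ C}, M3 F n s A B C (Sum.inr (Sum.inr (Sum.inr c)))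
        (τ (Sum.inr (Sum.inr (Sum.inr c))))
      = ∏ c : {c // c ∈ C}, (X c.1 : MvPolynomial (Fin n) F)
          ^ (cval (τ (Sum.inr (Sum.inr (Sum.inr c))))) := by
    apply Finset.prod_congr rfl
    intro c _
    obtain ⟨j, hj⟩ := h.2.2.2 c
    rw [hj]; simp [M3, cval]
  rw [htop, hA, hB, hC, one_mul, prod_X_pow_monomial, prod_X_pow_monomial, prod_X_pow_monomial,
    monomial_mul, monomial_mul, one_mul, one_mul]
  rw [w, add_assoc]

lemma w_apply_A (hAB : Disjoint A B) (hAC : Disjoint A C)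
    (τ : (Fin s ⊕ ({a // a ∈ A} ⊕ {b // b ∈ B} ⊕ {c // c ∈ C})) → (Fin s ⊕ (Fin s ⊕ Fin s)))
    (a : {a // a ∈ A}) :
    w τ a.1 = cval (τ (Sum.inr (Sum.inl a))) := by
  have hb : a.1 ∉ B := Finset.disjoint_left.mp hAB a.2
  have hc : a.1 ∉ C := Finset.disjoint_left.mp hAC a.2
  rw [w, Finsupp.add_apply, Finsupp.add_apply, sum_single_apply_of_mem _ a.2,
    sum_single_apply_of_not_mem _ hb, sum_single_apply_of_not_mem _ hc]
  simp

lemma w_apply_B (hAB : Disjoint A B) (hBC : Disjoint B C)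
    (τ : (Fin s ⊕ ({a // a ∈ A} ⊕ {b // b ∈ B} ⊕ {c // c ∈ C})) → (Fin s ⊕ (Fin s ⊕ Fin s)))
    (b : {b // b ∈ B}) :
    w τ b.1 = cval (τ (Sum.inr (Sum.inr (Sum.inl b)))) := by
  have ha : b.1 ∉ A := Finset.disjoint_right.mp hAB b.2
  have hc : b.1 ∉ C := Finset.disjoint_left.mp hBC b.2
  rw [w, Finsupp.add_apply, Finsupp.add_apply, sum_single_apply_of_mem _ b.2,
    sum_single_apply_of_not_mem _ ha, sum_single_apply_of_not_mem _ hc]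
  simp

lemma w_apply_C (hAC : Disjoint A C) (hBC : Disjoint B C)
    (τ : (Fin s ⊕ ({a // a ∈ A} ⊕ {b // b ∈ B} ⊕ {c // c ∈ C})) → (Fin s ⊕ (Fin s ⊕ Fin s)))
    (c : {c // c ∈ C}) :
    w τ c.1 = cval (τ (Sum.inr (Sum.inr (Sum.inr c)))) := by
  have ha : c.1 ∉ A := Finset.disjoint_right.mp hAC c.2
  have hb : c.1 ∉ B := Finset.disjoint_right.mp hBC c.2
  rw [w, Finsupp.add_apply, Finsupp.add_apply, sum_single_apply_of_mem _ c.2,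
    sum_single_apply_of_not_mem _ ha, sum_single_apply_of_not_mem _ hb]
  simp

lemma w_apply_le (hAB : Disjoint A B) (hAC : Disjoint A C) (hBC : Disjoint B C)
    (τ : (Fin s ⊕ ({a // a ∈ A} ⊕ {b // b ∈ B} ⊕ {c // c ∈ C})) → (Fin s ⊕ (Fin s ⊕ Fin s)))
    (x : Fin n) : w τ x ≤ s - 1 := by
  by_cases ha : x ∈ A
  · rw [w_apply_A hAB hAC τ ⟨x, ha⟩]; exact cval_le _
  by_cases hb : x ∈ B
  · rw [w_apply_B hAB hBC τ ⟨x, hb⟩]; exact cval_le _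
  by_cases hc : x ∈ C
  · rw [w_apply_C hAC hBC τ ⟨x, hc⟩]; exact cval_le _
  rw [w, Finsupp.add_apply, Finsupp.add_apply, sum_single_apply_of_not_mem _ ha,
    sum_single_apply_of_not_mem _ hb, sum_single_apply_of_not_mem _ hc]
  exact Nat.zero_le _

lemma w_sum (hsum : A.card + B.card + C.card = 2 * s)
    (τ : (Fin s ⊕ ({a // a ∈ A} ⊕ {b // b ∈ B} ⊕ {c // c ∈ C})) ≃ (Fin s ⊕ (Fin s ⊕ Fin s)))
    (hG : Good ⇑τ) :
    (w ⇑τ).sum (fun _ m => m) = s * (s - 1) := by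
  have hcomp : ∑ r, cval (τ r) = ∑ k, cval k := Equiv.sum_comp τ cval
  rw [Fintype.sum_sum_type, Fintype.sum_sum_type, Fintype.sum_sum_type,
    Fintype.sum_sum_type] at hcomp
  have htop : ∑ i : Fin s, cval (τ (Sum.inl i)) = ∑ i : Fin s, (i : ℕ) :=
    Finset.sum_congr rfl (fun i _ => by rcases hG.1 i with h | h | h <;> rw [h] <;> rfl)
  have hw : (w ⇑τ).sum (fun _ m => m)
      = (∑ a : {a // a ∈ A}, cval (τ (Sum.inr (Sum.inl a))))
        + (∑ b : {b // b ∈ B}, cval (τ (Sum.inr (Sum.inr (Sum.inl b)))))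
        + (∑ c : {c // c ∈ C}, cval (τ (Sum.inr (Sum.inr (Sum.inr c))))) := by
    rw [w, Finsupp.sum_add_index' (fun _ => rfl) (fun _ _ _ => rfl),
      Finsupp.sum_add_index' (fun _ => rfl) (fun _ _ _ => rfl),
      sum_single_total, sum_single_total, sum_single_total]
  have hT : (∑ i : Fin s, (i : ℕ)) * 2 = s * (s - 1) := by
    rw [Fin.sum_univ_eq_sum_range (fun i => i)]; exact Finset.sum_range_id_mul_two s
  have hc1 : ∑ j : Fin s, cval (Sum.inl j : Fin s ⊕ (Fin s ⊕ Fin s)) = ∑ i : Fin s, (i : ℕ) := rfl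
  have hc23 : ∑ a : Fin s ⊕ Fin s, cval (Sum.inr a : Fin s ⊕ (Fin s ⊕ Fin s))
      = (∑ i : Fin s, (i : ℕ)) + ∑ i : Fin s, (i : ℕ) := by
    rw [Fintype.sum_sum_type]
    rfl
  rw [htop, hc1, hc23] at hcomp
  omega

variable (A B C) in
/-- canonical equivalences with `Fin` of the card -/
noncomputable def eqA : {a // a ∈ A} ≃ Fin A.card :=
  Fintype.equivFinOfCardEq (Fintype.card_coe A)
variable (B) in
noncomputable def eqB : {b // b ∈ B} ≃ Fin B.card :=
  Fintype.equivFinOfCardEq (Fintype.card_coe B)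
variable (C) in
noncomputable def eqC : {c // c ∈ C} ≃ Fin C.card :=
  Fintype.equivFinOfCardEq (Fintype.card_coe C)

/-- the canonical good assignment of columns to rows -/
noncomputable def phi (hsum : A.card + B.card + C.card = 2 * s)
    (hA : A.card ≤ s) (hB : B.card ≤ s) (hC : C.card ≤ s) :
    (Fin s ⊕ ({a // a ∈ A} ⊕ {b // b ∈ B} ⊕ {c // c ∈ C})) → (Fin s ⊕ (Fin s ⊕ Fin s))
  | Sum.inl i =>
      if i.1 < s - C.card then Sum.inr (Sum.inr i)
      else if i.1 < A.card then Sum.inr (Sum.inl i)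
      else Sum.inl i
  | Sum.inr (Sum.inl a) => Sum.inl ⟨(eqA A a).1, by have := (eqA A a).2; omega⟩
  | Sum.inr (Sum.inr (Sum.inl b)) =>
      Sum.inr (Sum.inl ⟨if (eqB B b).1 < s - C.card then (eqB B b).1
        else (eqB B b).1 + (A.card + C.card) - s, by have := (eqB B b).2; split <;> omega⟩)
  | Sum.inr (Sum.inr (Sum.inr c)) =>
      Sum.inr (Sum.inr ⟨s - C.card + (eqC C c).1, by have := (eqC C c).2; omega⟩)

lemma phi_injective (hsum : A.card + B.card + C.card = 2 * s)
    (hA : A.card ≤ s) (hB : B.card ≤ s) (hC : C.card ≤ s) :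
    Function.Injective (phi hsum hA hB hC) := by
  intro r r' h
  rcases r with i | a | b | c <;> rcases r' with i' | a' | b' | c' <;>
    simp only [phi] at h
  -- top vs top
  · split_ifs at h <;> simp_all
  -- top vs A
  · split_ifs at h with h1 h2 <;> simp only [Sum.inl.injEq, reduceCtorEq] at h
    have hv := congrArg Fin.val h
    have := (eqA A a').2
    simp at hv
    omega
  -- top vs B
  · have hb' := (eqB B b').2
    split_ifs at h <;> split_ifs at h <;>
      simp only [Sum.inr.injEq, Sum.inl.injEq, reduceCtorEq, Fin.ext_iff, Fin.val_mk] at h <;>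
      omega
  -- top vs C
  · split_ifs at h with h1 h2 <;>
      simp only [Sum.inr.injEq, Sum.inl.injEq, reduceCtorEq] at h
    have hv := congrArg Fin.val h
    have := (eqC C c').2
    simp only at hv
    omega
  -- A vs top
  · split_ifs at h with h1 h2 <;> simp only [Sum.inl.injEq, reduceCtorEq] at h
    have hv := congrArg Fin.val h
    have := (eqA A a).2
    simp at hv
    omega
  -- A vs A
  · simp only [Sum.inl.injEq, Fin.mk.injEq] at h
    rw [(eqA A).injective (Fin.ext h)]
  -- A vs B
  · simp at h
  -- A vs C
  · simp at h
  -- B vs top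
  · have hb := (eqB B b).2
    replace h := h.symm
    split_ifs at h <;>
      simp only [Sum.inr.injEq, Sum.inl.injEq, reduceCtorEq, Fin.ext_iff, Fin.val_mk] at h <;>
      omega
  -- B vs A
  · simp at h
  -- B vs B
  · simp only [Sum.inr.injEq, Sum.inl.injEq, Fin.mk.injEq] at h
    have h1 := (eqB B b).2
    have h2 := (eqB B b').2
    have : (eqB B b).1 = (eqB B b').1 := by split_ifs at h <;> omega
    rw [(eqB B).injective (Fin.ext this)]
  -- B vs C
  · simp at h
  -- C vs top
  · split_ifs at h with h1 h2 <;>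
      simp only [Sum.inr.injEq, Sum.inl.injEq, reduceCtorEq] at h
    have hv := congrArg Fin.val h
    have := (eqC C c).2
    simp only at hv
    omega
  -- C vs A
  · simp at h
  -- C vs B
  · simp at h
  -- C vs C
  · simp only [Sum.inr.injEq, Fin.mk.injEq] at h
    have h1 := (eqC C c).2
    have h2 := (eqC C c').2
    have : (eqC C c).1 = (eqC C c').1 := by omega
    rw [(eqC C).injective (Fin.ext this)]

lemma good_phi (hsum : A.card + B.card + C.card = 2 * s)
    (hA : A.card ≤ s) (hB : B.card ≤ s) (hC : C.card ≤ s) :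
    Good (phi hsum hA hB hC) := by
  refine ⟨fun i => ?_, fun a => ⟨_, rfl⟩, fun b => ⟨_, rfl⟩, fun c => ⟨_, rfl⟩⟩
  simp only [phi]
  split_ifs <;> tauto

lemma eq_phi_of_w_eq (hAB : Disjoint A B) (hAC : Disjoint A C) (hBC : Disjoint B C)
    (hsum : A.card + B.card + C.card = 2 * s)
    (hA : A.card ≤ s) (hB : B.card ≤ s) (hC : C.card ≤ s)
    (τ : (Fin s ⊕ ({a // a ∈ A} ⊕ {b // b ∈ B} ⊕ {c // c ∈ C})) ≃ (Fin s ⊕ (Fin s ⊕ Fin s)))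
    (hG : Good ⇑τ) (hw : w ⇑τ = w (phi hsum hA hB hC)) :
    ⇑τ = phi hsum hA hB hC := by
  have hva : ∀ a : {a // a ∈ A}, τ (Sum.inr (Sum.inl a)) = phi hsum hA hB hC (Sum.inr (Sum.inl a)) := by
    intro a
    obtain ⟨j, hj⟩ := hG.2.1 a
    have h1 : cval (τ (Sum.inr (Sum.inl a))) = cval (phi hsum hA hB hC (Sum.inr (Sum.inl a))) := by
      rw [← w_apply_A hAB hAC ⇑τ a, ← w_apply_A hAB hAC (phi hsum hA hB hC) a, hw]
    rw [hj] at h1 ⊢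
    simp only [phi, cval, Sum.elim_inl] at h1 ⊢
    exact congrArg Sum.inl (Fin.ext h1)
  have hvb : ∀ b : {b // b ∈ B}, τ (Sum.inr (Sum.inr (Sum.inl b)))
      = phi hsum hA hB hC (Sum.inr (Sum.inr (Sum.inl b))) := by
    intro b
    obtain ⟨j, hj⟩ := hG.2.2.1 b
    have h1 : cval (τ (Sum.inr (Sum.inr (Sum.inl b))))
        = cval (phi hsum hA hB hC (Sum.inr (Sum.inr (Sum.inl b)))) := by
      rw [← w_apply_B hAB hBC ⇑τ b, ← w_apply_B hAB hBC (phi hsum hA hB hC) b, hw]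
    rw [hj] at h1 ⊢
    simp only [phi, cval, Sum.elim_inr, Sum.elim_inl] at h1 ⊢
    exact congrArg (fun x => Sum.inr (Sum.inl x)) (Fin.ext h1)
  have hvc : ∀ c : {c // c ∈ C}, τ (Sum.inr (Sum.inr (Sum.inr c)))
      = phi hsum hA hB hC (Sum.inr (Sum.inr (Sum.inr c))) := by
    intro c
    obtain ⟨j, hj⟩ := hG.2.2.2 c
    have h1 : cval (τ (Sum.inr (Sum.inr (Sum.inr c))))
        = cval (phi hsum hA hB hC (Sum.inr (Sum.inr (Sum.inr c)))) := by
      rw [← w_apply_C hAC hBC ⇑τ c, ← w_apply_C hAC hBC (phi hsum hA hB hC) c, hw]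
    rw [hj] at h1 ⊢
    simp only [phi, cval, Sum.elim_inr] at h1 ⊢
    exact congrArg (fun x => Sum.inr (Sum.inr x)) (Fin.ext h1)
  funext r
  rcases r with i | a | b | c
  · -- top rows
    -- rows of the three "copies of i" that phi assigns to variable rows
    by_cases h1 : (i : ℕ) < s - C.card
    · -- phi sends top row i to the C-copy; A-copy and B-copy are taken
      have ha0 : τ (Sum.inr (Sum.inl ((eqA A).symm ⟨(i : ℕ), by omega⟩))) = Sum.inl i := by
        rw [hva]
        simp only [phi, Equiv.apply_symm_apply]
        try exact congrArg Sum.inl (Fin.ext rfl)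
      have hb0 : τ (Sum.inr (Sum.inr (Sum.inl ((eqB B).symm ⟨(i : ℕ), by omega⟩))))
          = Sum.inr (Sum.inl i) := by
        rw [hvb]
        simp only [phi, Equiv.apply_symm_apply]
        refine congrArg (fun x => Sum.inr (Sum.inl x)) (Fin.ext ?_)
        simp only [Fin.val_mk]
        rw [if_pos h1]
      rcases hG.1 i with h | h | h
      · exact absurd (τ.injective (ha0.trans h.symm)) (by simp)
      · exact absurd (τ.injective (hb0.trans h.symm)) (by simp)
      · rw [h]
        simp only [phi]
        rw [if_pos h1]
    · by_cases h2 : (i : ℕ) < A.card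
      · -- phi sends top row i to the B-copy; A-copy and C-copy are taken
        have ha0 : τ (Sum.inr (Sum.inl ((eqA A).symm ⟨(i : ℕ), by omega⟩))) = Sum.inl i := by
          rw [hva]
          simp only [phi, Equiv.apply_symm_apply]
          try exact congrArg Sum.inl (Fin.ext rfl)
        have hc0 : τ (Sum.inr (Sum.inr (Sum.inr ((eqC C).symm
            ⟨(i : ℕ) - (s - C.card), by have := i.isLt; omega⟩))))
            = Sum.inr (Sum.inr i) := by
          rw [hvc]
          simp only [phi, Equiv.apply_symm_apply]
          refine congrArg (fun x => Sum.inr (Sum.inr x)) (Fin.ext ?_)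
          simp only [Fin.val_mk]
          omega
        rcases hG.1 i with h | h | h
        · exact absurd (τ.injective (ha0.trans h.symm)) (by simp)
        · rw [h]
          simp only [phi]
          rw [if_neg h1, if_pos h2]
        · exact absurd (τ.injective (hc0.trans h.symm)) (by simp)
      · -- phi sends top row i to the A-copy; B-copy and C-copy are taken
        have hscA : s - C.card ≤ A.card := by omega
        have hb0 : τ (Sum.inr (Sum.inr (Sum.inl ((eqB B).symm
            ⟨(i : ℕ) + s - (A.card + C.card), by have := i.isLt; omega⟩))))
            = Sum.inr (Sum.inl i) := by
          rw [hvb]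
          simp only [phi, Equiv.apply_symm_apply]
          refine congrArg (fun x => Sum.inr (Sum.inl x)) (Fin.ext ?_)
          simp only [Fin.val_mk]
          rw [if_neg (by have := i.isLt; omega)]
          have := i.isLt; omega
        have hc0 : τ (Sum.inr (Sum.inr (Sum.inr ((eqC C).symm
            ⟨(i : ℕ) - (s - C.card), by have := i.isLt; omega⟩))))
            = Sum.inr (Sum.inr i) := by
          rw [hvc]
          simp only [phi, Equiv.apply_symm_apply]
          refine congrArg (fun x => Sum.inr (Sum.inr x)) (Fin.ext ?_)
          simp only [Fin.val_mk]
          omega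
        rcases hG.1 i with h | h | h
        · rw [h]
          simp only [phi]
          rw [if_neg h1, if_neg h2]
        · exact absurd (τ.injective (hb0.trans h.symm)) (by simp)
        · exact absurd (τ.injective (hc0.trans h.symm)) (by simp)
  · exact hva a
  · exact hvb b
  · exact hvc c

end Stmt3Aux

/-- For pairwise disjoint `A, B, C ⊆ [n]` with `|A|+|B|+|C| = 2s` and each of size at most `s`,
the determinant of the `3s × 3s` 3-wise intersection matrix is a nonzero polynomial of total
degree `s(s-1)` in which every variable has individual degree at most `s-1`. -/
theorem stmt_3 (F : Type*) [Field F] (n s : ℕ) (A B C : Finset (Fin n))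
    (hAB : Disjoint A B) (hAC : Disjoint A C) (hBC : Disjoint B C)
    (hsum : A.card + B.card + C.card = 2 * s)
    (hA : A.card ≤ s) (hB : B.card ≤ s) (hC : C.card ≤ s)
    (e : (Fin s ⊕ (Fin s ⊕ Fin s)) ≃ (Fin s ⊕ ({a // a ∈ A} ⊕ {b // b ∈ B} ⊕ {c // c ∈ C}))) :
    ((M3 F n s A B C).submatrix e id).det ≠ 0 ∧
    ((M3 F n s A B C).submatrix e id).det.totalDegree = s * (s - 1) ∧
    ∀ i : Fin n, ((M3 F n s A B C).submatrix e id).det.degreeOf i ≤ s - 1 := by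
  classical
  set m0 : Fin n →₀ ℕ := Stmt3Aux.w (Stmt3Aux.phi hsum hA hB hC) with hm0
  have hcard : Fintype.card (Fin s ⊕ ({a // a ∈ A} ⊕ {b // b ∈ B} ⊕ {c // c ∈ C}))
      = Fintype.card (Fin s ⊕ (Fin s ⊕ Fin s)) := Fintype.card_congr e.symm
  have hbij : Function.Bijective (Stmt3Aux.phi hsum hA hB hC) :=
    (Fintype.bijective_iff_injective_and_card _).2
      ⟨Stmt3Aux.phi_injective hsum hA hB hC, hcard⟩
  set tau0 := Equiv.ofBijective _ hbij with htau0def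
  have htau0c : ⇑tau0 = Stmt3Aux.phi hsum hA hB hC := rfl
  set σ0 := (e.trans tau0).symm with hσ0def
  have hts : Stmt3Aux.Good ⇑tau0 := by
    rw [htau0c]; exact Stmt3Aux.good_phi hsum hA hB hC
  have htau0' : e.symm.trans σ0.symm = tau0 := by
    apply Equiv.ext; intro r; simp [hσ0def]
  have hdet : ((M3 F n s A B C).submatrix e id).det
      = ∑ σ : Equiv.Perm (Fin s ⊕ (Fin s ⊕ Fin s)),
          ((Equiv.Perm.sign σ : ℤ)) • ∏ r, M3 F n s A B C r ((e.symm.trans σ.symm) r) := by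
    rw [Matrix.det_apply]
    refine Finset.sum_congr rfl fun σ _ => ?_
    rw [Units.smul_def]
    congr 1
    rw [← Equiv.prod_comp (e.symm.trans σ.symm)
      (fun k => (M3 F n s A B C).submatrix e id (σ k) k)]
    refine Finset.prod_congr rfl fun r _ => ?_
    simp [Matrix.submatrix_apply]
  have hσeq : ∀ σ : Equiv.Perm (Fin s ⊕ (Fin s ⊕ Fin s)),
      Stmt3Aux.Good ⇑(e.symm.trans σ.symm) →
      Stmt3Aux.w ⇑(e.symm.trans σ.symm) = m0 → σ = σ0 := by
    intro σ hg hweq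
    have h1 : ⇑(e.symm.trans σ.symm) = Stmt3Aux.phi hsum hA hB hC :=
      Stmt3Aux.eq_phi_of_w_eq hAB hAC hBC hsum hA hB hC _ hg hweq
    have h2 : e.symm.trans σ.symm = tau0 := DFunLike.coe_injective (h1.trans htau0c.symm)
    have h3 : σ.symm = σ0.symm := by
      apply Equiv.ext; intro k
      calc σ.symm k = (e.symm.trans σ.symm) (e k) := by simp
        _ = (e.symm.trans σ0.symm) (e k) := by rw [h2, htau0']
        _ = σ0.symm k := by simp
    rw [← Equiv.symm_symm σ, h3, Equiv.symm_symm]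
  have hwm0 : Stmt3Aux.w ⇑tau0 = m0 := by rw [htau0c]
  have hcoeff : MvPolynomial.coeff m0 (((M3 F n s A B C).submatrix e id).det)
      = ((Equiv.Perm.sign σ0 : ℤ)) • (1 : F) := by
    rw [hdet, MvPolynomial.coeff_sum]
    rw [Finset.sum_eq_single σ0]
    · rw [htau0', Stmt3Aux.prod_eq_monomial F _ hts, hwm0, MvPolynomial.coeff_smul,
        MvPolynomial.coeff_monomial, if_pos rfl]
    · intro σ _ hne
      by_cases hg : Stmt3Aux.Good ⇑(e.symm.trans σ.symm)
      · rw [Stmt3Aux.prod_eq_monomial F _ hg, MvPolynomial.coeff_smul,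
          MvPolynomial.coeff_monomial, if_neg (fun heq => hne (hσeq σ hg heq)), smul_zero]
      · have h0 : ∏ r, M3 F n s A B C r ((e.symm.trans σ.symm) r) = 0 := by
          by_contra h0
          exact hg (Stmt3Aux.good_of_prod_ne_zero F _ h0)
        rw [h0, smul_zero, MvPolynomial.coeff_zero]
    · intro hmem; exact absurd (Finset.mem_univ σ0) hmem
  have hc0 : MvPolynomial.coeff m0 (((M3 F n s A B C).submatrix e id).det) ≠ 0 := by
    rw [hcoeff]
    rcases Int.units_eq_one_or (Equiv.Perm.sign σ0) with h | h <;> rw [h] <;> simp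
  refine ⟨?_, ?_, ?_⟩
  · intro h; rw [h] at hc0; simp at hc0
  · apply le_antisymm
    · rw [hdet]
      refine MvPolynomial.totalDegree_finsetSum_le fun σ _ => ?_
      refine le_trans (MvPolynomial.totalDegree_smul_le _ _) ?_
      by_cases hg : Stmt3Aux.Good ⇑(e.symm.trans σ.symm)
      · rw [Stmt3Aux.prod_eq_monomial F _ hg,
          MvPolynomial.totalDegree_monomial _ (one_ne_zero : (1 : F) ≠ 0)]
        exact le_of_eq (Stmt3Aux.w_sum hsum _ hg)
      · have h0 : ∏ r, M3 F n s A B C r ((e.symm.trans σ.symm) r) = 0 := by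
          by_contra h0
          exact hg (Stmt3Aux.good_of_prod_ne_zero F _ h0)
        rw [h0]
        simp
    · have hsupp : m0 ∈ (((M3 F n s A B C).submatrix e id).det).support :=
        MvPolynomial.mem_support_iff.2 hc0
      have hle := MvPolynomial.le_totalDegree hsupp
      have hms : m0.sum (fun _ m => m) = s * (s - 1) := by
        have h := Stmt3Aux.w_sum hsum tau0 hts
        rw [hwm0] at h
        exact h
      rw [← hms]
      exact hle
  · intro x
    rw [hdet]
    refine le_trans (MvPolynomial.degreeOf_sum_le _ _ _) ?_
    refine Finset.sup_le fun σ _ => ?_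
    have hb : MvPolynomial.degreeOf x (∏ r, M3 F n s A B C r ((e.symm.trans σ.symm) r))
        ≤ s - 1 := by
      by_cases hg : Stmt3Aux.Good ⇑(e.symm.trans σ.symm)
      · rw [Stmt3Aux.prod_eq_monomial F _ hg,
          MvPolynomial.degreeOf_monomial_eq _ _ (one_ne_zero : (1 : F) ≠ 0)]
        exact Stmt3Aux.w_apply_le hAB hAC hBC _ x
      · have h0 : ∏ r, M3 F n s A B C r ((e.symm.trans σ.symm) r) = 0 := by
          by_contra h0
          exact hg (Stmt3Aux.good_of_prod_ne_zero F _ h0)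
        rw [h0]
        simp
    rcases Int.units_eq_one_or (Equiv.Perm.sign σ) with h | h <;> rw [h]
    · rw [Units.val_one, one_smul]; exact hb
    · rw [Units.val_neg, Units.val_one, neg_smul, one_smul, MvPolynomial.degreeOf_neg]
      exact hb
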